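/- Let X be a locally compact, totally disconnected Hausdorff space with a basis of compact open sets, and let A be a topological abelian group. Then the following are equivalent for the canonical comparison map Φ_X : C_c(X, ℤ) ⊗_ℤ A → C_c(X, A): (1) every ζ ∈ C_c(X, A) is locally constant; (2) Φ_X is surjective; (3) Φ_X is an isomorphism of abelian groups. In particular, if A is discrete then Φ_X is an isomorphism. (Corollary 3.2.4.) -/

import Mathlib

open scoped CompactlySupported
open Set Function

variable (X A : Type*) [TopologicalSpace X]
  [AddCommGroup A] [TopologicalSpace A] [IsTopologicalAddGroup A]

/-- The bilinear map `(f, a) ↦ (x ↦ f x • a)` from `C_c(X, ℤ) × A` to `C_c(X, A)`. -/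
noncomputable def ccSmulBilin :
    C_c(X, ℤ) →ₗ[ℤ] A →ₗ[ℤ] C_c(X, A) where
  toFun f :=
    { toFun := fun a =>
        { toFun := fun x => f x • a
          continuous_toFun := by
            exact (continuous_of_discreteTopology (f := fun n : ℤ => n • a)).comp f.continuous
          hasCompactSupport' := by
            have h := f.hasCompactSupport.comp_left (g := fun n : ℤ => n • a) (zero_smul ℤ a)
            exact h
      }
      map_add' := fun a b => by
        ext x
        exact smul_add (f x) a b
      map_smul' := fun z a => by
        ext x
        exact smul_comm (f x) z a }
  map_add' f g := by
    ext a x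
    exact add_smul (f x) (g x) a
  map_smul' z f := by
    ext a x
    exact mul_smul z (f x) a

/-- The canonical comparison map `Φ_X : C_c(X, ℤ) ⊗_ℤ A → C_c(X, A)`, the unique additive
map with `Φ_X (f ⊗ a) x = f x • a`. -/
noncomputable def ccComparison :
    TensorProduct ℤ C_c(X, ℤ) A →ₗ[ℤ] C_c(X, A) :=
  TensorProduct.lift (ccSmulBilin X A)

section Aux

theorem ccComparison_tmul_apply {X A : Type*} [TopologicalSpace X]
    [AddCommGroup A] [TopologicalSpace A] [IsTopologicalAddGroup A]
    (f : C_c(X, ℤ)) (a : A) (x : X) :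
    ccComparison X A (f ⊗ₜ[ℤ] a) x = f x • a := rfl

/-- Any locally constant compactly supported map can be written as a finite sum of
"indicator times value" terms. -/
theorem ccExistsRepr {X B : Type*} [TopologicalSpace X] [AddCommGroup B]
    [TopologicalSpace B] [IsTopologicalAddGroup B] (ζ : C_c(X, B))
    (h : IsLocallyConstant (⇑ζ)) :
    ∃ (S : Finset B) (g : B → C_c(X, ℤ)),
      (∀ a ∈ S, ∃ x, ζ x = a) ∧
      (∀ x, ζ x = ∑ a ∈ S, g a x • a) := by
  classical
  have hK : IsCompact (tsupport ⇑ζ) := ζ.hasCompactSupport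
  haveI : CompactSpace (tsupport ⇑ζ) := isCompact_iff_compactSpace.mp hK
  have hfin : (Set.range (⇑ζ ∘ (Subtype.val : tsupport ⇑ζ → X))).Finite :=
    (h.comp_continuous continuous_subtype_val).range_finite
  have hfin' : ((Set.range (⇑ζ ∘ (Subtype.val : tsupport ⇑ζ → X))) \ {0}).Finite :=
    hfin.diff
  have hcont : ∀ a : B, Continuous fun x : X => (if ζ x = a then (1 : ℤ) else 0) :=
    fun a => (h.comp fun b => if b = a then (1 : ℤ) else 0).continuous
  set g : B → C_c(X, ℤ) := fun a =>
    if ha : a = 0 then 0 else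
      ⟨⟨fun x => if ζ x = a then 1 else 0, hcont a⟩,
        HasCompactSupport.mono ζ.hasCompactSupport (fun x hx => by
          rw [Function.mem_support] at hx ⊢
          intro h0
          apply hx
          show (if ζ x = a then (1 : ℤ) else 0) = 0
          rw [h0, if_neg (Ne.symm ha)])⟩ with hg
  have hgval : ∀ a : B, a ≠ 0 → ∀ x : X, g a x = if ζ x = a then 1 else 0 := by
    intro a ha x
    rw [hg]
    simp only [dif_neg ha]
    rfl
  refine ⟨hfin'.toFinset, g, ?_, ?_⟩
  · intro a ha
    rw [Set.Finite.mem_toFinset] at ha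
    obtain ⟨y, hy⟩ := ha.1
    exact ⟨y.1, hy⟩
  · intro x
    have hne : ∀ a ∈ hfin'.toFinset, a ≠ 0 := by
      intro a ha
      rw [Set.Finite.mem_toFinset] at ha
      exact ha.2
    by_cases hx : ζ x = 0
    · rw [hx]
      symm
      refine Finset.sum_eq_zero fun a ha => ?_
      rw [hgval a (hne a ha) x, hx, if_neg (Ne.symm (hne a ha)), zero_smul]
    · have hmem : ζ x ∈ hfin'.toFinset := by
        rw [Set.Finite.mem_toFinset]
        refine ⟨⟨⟨x, subset_closure (by simpa using hx)⟩, rfl⟩, by simpa using hx⟩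
      rw [Finset.sum_eq_single_of_mem (ζ x) hmem]
      · rw [hgval _ hx x, if_pos rfl, one_smul]
      · intro a ha hax
        rw [hgval a (hne a ha) x, if_neg (fun hh => hax hh.symm), zero_smul]

theorem ccComparison_isLocallyConstant {X A : Type*} [TopologicalSpace X]
    [AddCommGroup A] [TopologicalSpace A] [IsTopologicalAddGroup A]
    (t : TensorProduct ℤ C_c(X, ℤ) A) :
    IsLocallyConstant (⇑(ccComparison X A t)) := by
  induction t using TensorProduct.induction_on with
  | zero =>
      have : ⇑(ccComparison X A 0) = fun _ : X => (0 : A) := by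
        rw [map_zero]; rfl
      rw [this]
      exact IsLocallyConstant.const 0
  | tmul f a =>
      have : ⇑(ccComparison X A (f ⊗ₜ a)) = (fun n : ℤ => n • a) ∘ ⇑f := rfl
      rw [this]
      exact ((IsLocallyConstant.iff_continuous ⇑f).mpr f.continuous).comp _
  | add s u hs hu =>
      have : ⇑(ccComparison X A (s + u)) =
          ⇑(ccComparison X A s) + ⇑(ccComparison X A u) := by
        rw [map_add]; rfl
      rw [this]
      exact hs.add hu

theorem ccComparison_surjOn {X A : Type*} [TopologicalSpace X]
    [AddCommGroup A] [TopologicalSpace A] [IsTopologicalAddGroup A]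
    (ζ : C_c(X, A)) (h : IsLocallyConstant (⇑ζ)) :
    ∃ t, ccComparison X A t = ζ := by
  obtain ⟨S, g, -, hsum⟩ := ccExistsRepr ζ h
  refine ⟨∑ a ∈ S, g a ⊗ₜ a, ?_⟩
  ext x
  rw [map_sum, CompactlySupportedContinuousMap.sum_apply, hsum x]
  exact Finset.sum_congr rfl fun a _ => rfl

theorem ccComparison_injective {X A : Type*} [TopologicalSpace X]
    [AddCommGroup A] [TopologicalSpace A] [IsTopologicalAddGroup A] :
    Function.Injective (ccComparison X A) := by
  rw [injective_iff_map_eq_zero]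
  intro t ht
  obtain ⟨T, rfl⟩ := TensorProduct.exists_finset t
  classical
  have hFsupp : HasCompactSupport
      (fun x : X => fun p : ↥T => (p : C_c(X, ℤ) × A).1 x) := by
    have hcomp : IsCompact (⋃ p : ↥T, tsupport ⇑(p : C_c(X, ℤ) × A).1) :=
      isCompact_iUnion fun p => (p : C_c(X, ℤ) × A).1.hasCompactSupport
    refine IsCompact.of_isClosed_subset hcomp isClosed_closure
      (closure_minimal ?_ (isClosed_iUnion_of_finite fun p => isClosed_closure))
    intro x hx
    simp only [Function.mem_support] at hx
    have hex : ∃ p : ↥T, (p : C_c(X, ℤ) × A).1 x ≠ 0 := by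
      by_contra hc
      push_neg at hc
      exact hx (funext fun p => hc p)
    obtain ⟨p, hp⟩ := hex
    exact Set.mem_iUnion.mpr ⟨p, subset_closure hp⟩
  set F : C_c(X, ↥T → ℤ) :=
    ⟨⟨fun x => fun p : ↥T => (p : C_c(X, ℤ) × A).1 x,
      continuous_pi fun p => (p : C_c(X, ℤ) × A).1.continuous⟩, hFsupp⟩ with hF
  have hFlc : IsLocallyConstant (⇑F) :=
    (IsLocallyConstant.iff_continuous (⇑F)).mpr F.continuous
  obtain ⟨S, g, hwit, hsum⟩ := ccExistsRepr F hFlc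
  have hcoord : ∀ (x : X) (p : ↥T),
      (p : C_c(X, ℤ) × A).1 x = ∑ v ∈ S, g v x * v p := by
    intro x p
    have h1 := congrFun (hsum x) p
    have h2 : F x p = ∑ v ∈ S, g v x * v p := by
      simpa [Finset.sum_apply, smul_eq_mul] using h1
    exact h2
  have hval : ∀ v ∈ S, ∑ p ∈ T.attach, v p • (p : C_c(X, ℤ) × A).2 = 0 := by
    intro v hv
    obtain ⟨x, hx⟩ := hwit v hv
    have h1 : ∀ p : ↥T, v p = (p : C_c(X, ℤ) × A).1 x := fun p => by
      rw [← hx]; rfl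
    have h2 : ∑ p ∈ T.attach, v p • (p : C_c(X, ℤ) × A).2 =
        (ccComparison X A (∑ p ∈ T, p.1 ⊗ₜ[ℤ] p.2)) x := by
      rw [map_sum, CompactlySupportedContinuousMap.sum_apply,
        ← Finset.sum_attach T fun p => (ccComparison X A (p.1 ⊗ₜ[ℤ] p.2)) x]
      exact Finset.sum_congr rfl fun p _ => by rw [h1 p]; rfl
    rw [h2, ht]
    rfl
  have hfst : ∀ p : ↥T, (p : C_c(X, ℤ) × A).1 = ∑ v ∈ S, v p • g v := by
    intro p
    ext x
    rw [CompactlySupportedContinuousMap.sum_apply]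
    rw [hcoord x p]
    exact Finset.sum_congr rfl fun v _ => by
      simp [mul_comm, smul_eq_mul]
  calc ∑ p ∈ T, p.1 ⊗ₜ[ℤ] p.2
      = ∑ p ∈ T.attach, (p : C_c(X, ℤ) × A).1 ⊗ₜ[ℤ] (p : C_c(X, ℤ) × A).2 :=
        (Finset.sum_attach T fun p => p.1 ⊗ₜ[ℤ] p.2).symm
    _ = ∑ p ∈ T.attach, ∑ v ∈ S,
          g v ⊗ₜ[ℤ] (v p • (p : C_c(X, ℤ) × A).2) := by
        refine Finset.sum_congr rfl fun p _ => ?_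
        rw [hfst p, TensorProduct.sum_tmul]
        exact Finset.sum_congr rfl fun v _ => by
          rw [← TensorProduct.smul_tmul]
    _ = ∑ v ∈ S, g v ⊗ₜ[ℤ] (∑ p ∈ T.attach, v p • (p : C_c(X, ℤ) × A).2) := by
        rw [Finset.sum_comm]
        exact Finset.sum_congr rfl fun v _ => (TensorProduct.tmul_sum _ _ _).symm
    _ = 0 := by
        refine Finset.sum_eq_zero fun v hv => ?_
        rw [hval v hv, TensorProduct.tmul_zero]

end Aux

/-- **Corollary 3.2.4.** Let `X` be a locally compact, totally disconnected Hausdorff space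
with a basis of compact open sets, and `A` a topological abelian group. For the canonical
comparison map `Φ_X : C_c(X, ℤ) ⊗_ℤ A → C_c(X, A)` the following are equivalent:
(1) every `ζ ∈ C_c(X, A)` is locally constant; (2) `Φ_X` is surjective; (3) `Φ_X` is an
isomorphism of abelian groups (i.e. bijective). In particular, if `A` is discrete then
`Φ_X` is an isomorphism. -/
theorem ccComparison_surjective_tfae {X A : Type*} [TopologicalSpace X]
    [LocallyCompactSpace X] [T2Space X] [TotallyDisconnectedSpace X]
    (hbasis : ∀ x : X, ∀ U : Set X, IsOpen U → x ∈ U →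
      ∃ V : Set X, IsCompact V ∧ IsOpen V ∧ x ∈ V ∧ V ⊆ U)
    [AddCommGroup A] [TopologicalSpace A] [IsTopologicalAddGroup A] :
    ((∀ ζ : C_c(X, A), IsLocallyConstant (⇑ζ)) ↔
        Function.Surjective (ccComparison X A)) ∧
    (Function.Surjective (ccComparison X A) ↔
        Function.Bijective (ccComparison X A)) ∧
    (DiscreteTopology A → Function.Bijective (ccComparison X A)) := by
  have hsurj_of_lc : (∀ ζ : C_c(X, A), IsLocallyConstant (⇑ζ)) →
      Function.Surjective (ccComparison X A) := fun h ζ =>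
    ccComparison_surjOn ζ (h ζ)
  have hlc_of_surj : Function.Surjective (ccComparison X A) →
      ∀ ζ : C_c(X, A), IsLocallyConstant (⇑ζ) := by
    intro h ζ
    obtain ⟨t, rfl⟩ := h ζ
    exact ccComparison_isLocallyConstant t
  refine ⟨⟨hsurj_of_lc, hlc_of_surj⟩,
    ⟨fun h => ⟨ccComparison_injective, h⟩, fun h => h.2⟩, fun hA => ?_⟩
  refine ⟨ccComparison_injective, hsurj_of_lc fun ζ => ?_⟩
  exact (IsLocallyConstant.iff_continuous (⇑ζ)).mpr ζ.continuous
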